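/- Suppose f is worst-case monotone and worst-case submodular, and f(φ) = Q for every φ ∈ U. Let ψ be a partial realization consistent with some realization in U such that f(ψ) < Q, and let e ∈ E \ dom(ψ) be an item maximizing Δwc(e|ψ)/c(e) over E \ dom(ψ). Then for every adaptive policy π* that covers Q (i.e., f(ψ(π*,φ)) ≥ Q for every φ ∈ U), c(e) ≤ c_wc(π*); that is, the cost of every item selected by the worst-case density-greedy policy is at most the worst-case cost of any covering policy. -/

import Mathlib

namespace WCAS

variable {ι O : Type*}

/-- The domain of a partial realization `ψ : ι → Option O`. -/
def dom (ψ : ι → Option O) : Set ι := {e | ψ e ≠ none}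

/-- A (full) realization `φ` is consistent with a partial realization `ψ`. -/
def consistent (φ : ι → O) (ψ : ι → Option O) : Prop :=
  ∀ e o, ψ e = some o → φ e = o

/-- `ψ` is a subrealization of `ψ'` (written `ψ ⊆ ψ'`). -/
def subreal (ψ ψ' : ι → Option O) : Prop :=
  ∀ e o, ψ e = some o → ψ' e = some o

/-- Extend a partial realization `ψ` by observing state `o` for item `e`. -/
def extendPR [DecidableEq ι] (ψ : ι → Option O) (e : ι) (o : O) : ι → Option O :=
  fun x => if x = e then some o else ψ x

/-- The empty partial realization. -/
def emptyPR : ι → Option O := fun _ => none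

/-- View a full realization as a partial realization with full domain. -/
def toPR (φ : ι → O) : ι → Option O := fun e => some (φ e)

/-- `O(e, ψ)`: the set of possible states of item `e` given observation `ψ`,
with respect to the set `U` of possible realizations. -/
def Ostates (U : Set (ι → O)) (e : ι) (ψ : ι → Option O) : Set O :=
  {o | ∃ φ ∈ U, consistent φ ψ ∧ φ e = o}

/-- The worst-case marginal utility `Δwc(e | ψ)` of item `e` on top of `ψ`. -/
noncomputable def Dwc [DecidableEq ι] (f : (ι → Option O) → ℝ) (U : Set (ι → O))
    (e : ι) (ψ : ι → Option O) : ℝ :=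
  sInf ((fun o => f (extendPR ψ e o) - f ψ) '' Ostates U e ψ)

/-- `f` is worst-case monotone. -/
def WCMonotone [DecidableEq ι] (f : (ι → Option O) → ℝ) (U : Set (ι → O)) : Prop :=
  ∀ ψ : ι → Option O, (∃ φ ∈ U, consistent φ ψ) →
    ∀ e, e ∉ dom ψ → 0 ≤ Dwc f U e ψ

/-- `f` is worst-case submodular. -/
def WCSubmodular [DecidableEq ι] (f : (ι → Option O) → ℝ) (U : Set (ι → O)) : Prop :=
  ∀ ψ ψ' : ι → Option O, subreal ψ ψ' → (∃ φ ∈ U, consistent φ ψ') →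
    ∀ e, e ∉ dom ψ' → Dwc f U e ψ' ≤ Dwc f U e ψ

/-- An adaptive policy maps each observation either to an item outside its
domain or to `none` (stop). -/
def ValidPolicy (π : (ι → Option O) → Option ι) : Prop :=
  ∀ ψ e, π ψ = some e → ψ e = none

/-- One step of executing policy `π` under realization `φ`. -/
def stepPolicy [DecidableEq ι] (π : (ι → Option O) → Option ι) (φ : ι → O)
    (ψ : ι → Option O) : ι → Option O :=
  match π ψ with
  | none => ψ
  | some e => extendPR ψ e (φ e)

/-- Executing policy `π` under realization `φ` for `n` steps, starting from the
empty observation. -/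
def runPolicy [DecidableEq ι] (π : (ι → Option O) → Option ι) (φ : ι → O) :
    ℕ → ι → Option O
  | 0 => emptyPR
  | n + 1 => stepPolicy π φ (runPolicy π φ n)

/-- The final partial realization `ψ(π, φ)` produced by executing `π` under `φ`
(a valid policy over a finite ground set terminates within `card ι` steps). -/
def finalPR [DecidableEq ι] [Fintype ι] (π : (ι → Option O) → Option ι) (φ : ι → O) :
    ι → Option O :=
  runPolicy π φ (Fintype.card ι)

open scoped Classical in
/-- The total cost `c(dom ψ)` of the items in the domain of `ψ`. -/
noncomputable def costPR [Fintype ι] (c : ι → ℝ) (ψ : ι → Option O) : ℝ :=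
  ∑ e : ι, if (ψ e).isSome then c e else 0

/-- The worst-case cost `c_wc(π) = max_{φ ∈ U} c(dom ψ(π, φ))`. -/
noncomputable def cwc [DecidableEq ι] [Fintype ι] (c : ι → ℝ) (U : Set (ι → O))
    (π : (ι → Option O) → Option ι) : ℝ :=
  sSup ((fun φ => costPR c (finalPR π φ)) '' U)

/-- The worst-case utility `f_wc(π) = min_{φ ∈ U} f(ψ(π, φ))`. -/
noncomputable def fwc [DecidableEq ι] [Fintype ι] (f : (ι → Option O) → ℝ)
    (U : Set (ι → O)) (π : (ι → Option O) → Option ι) : ℝ :=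
  sInf ((fun φ => f (finalPR π φ)) '' U)

/-- `ψ` is reachable by executing `π` under some realization in `U`. -/
def Reachable [DecidableEq ι] (π : (ι → Option O) → Option ι) (U : Set (ι → O))
    (ψ : ι → Option O) : Prop :=
  ∃ φ ∈ U, ∃ n, runPolicy π φ n = ψ

/-- Policy `π` covers the goal value `Q`: under every realization in `U`,
its final observation has utility at least `Q`. -/
def Covers [DecidableEq ι] [Fintype ι] (f : (ι → Option O) → ℝ) (U : Set (ι → O))
    (π : (ι → Option O) → Option ι) (Q : ℝ) : Prop :=
  ∀ φ ∈ U, Q ≤ f (finalPR π φ)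

/-- The worst-case density-greedy policy for the cover problem with goal `Q`:
it stops at observations with `f ψ ≥ Q`, and at any reachable observation with
`f ψ < Q` it selects an item maximizing `Δwc(e | ψ) / c(e)`. -/
def CoverGreedy [DecidableEq ι] [Fintype ι] (f : (ι → Option O) → ℝ)
    (U : Set (ι → O)) (c : ι → ℝ) (Q : ℝ) (π : (ι → Option O) → Option ι) : Prop :=
  ValidPolicy π ∧
  (∀ ψ : ι → Option O, Q ≤ f ψ → π ψ = none) ∧
  (∀ ψ : ι → Option O, Reachable π U ψ → f ψ < Q →
    ∃ e, e ∉ dom ψ ∧ π ψ = some e ∧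
      ∀ e', e' ∉ dom ψ → Dwc f U e' ψ / c e' ≤ Dwc f U e ψ / c e)

/-- The budgeted worst-case density-greedy policy: at any reachable observation
it picks a density-maximizing item and selects it if the budget permits,
stopping otherwise. -/
def BudgetGreedy [DecidableEq ι] [Fintype ι] (f : (ι → Option O) → ℝ)
    (U : Set (ι → O)) (c : ι → ℝ) (B : ℝ) (π : (ι → Option O) → Option ι) : Prop :=
  ValidPolicy π ∧
  ∀ ψ : ι → Option O, Reachable π U ψ → dom ψ ≠ Set.univ →
    ∃ e, e ∉ dom ψ ∧
      (∀ e', e' ∉ dom ψ → Dwc f U e' ψ / c e' ≤ Dwc f U e ψ / c e) ∧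
      ((costPR c ψ + c e ≤ B ∧ π ψ = some e) ∨ (B < costPR c ψ + c e ∧ π ψ = none))

/-- The relaxed budgeted worst-case density-greedy policy: it keeps selecting
density-maximizing items while the cost spent so far is within the budget
(thus also selecting the first item that makes the total cost exceed the
budget), and stops once the budget has been exceeded. -/
def RelaxedBudgetGreedy [DecidableEq ι] [Fintype ι] (f : (ι → Option O) → ℝ)
    (U : Set (ι → O)) (c : ι → ℝ) (B : ℝ) (π : (ι → Option O) → Option ι) : Prop :=
  ValidPolicy π ∧
  (∀ ψ : ι → Option O, Reachable π U ψ → B < costPR c ψ → π ψ = none) ∧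
  (∀ ψ : ι → Option O, Reachable π U ψ → costPR c ψ ≤ B → dom ψ ≠ Set.univ →
    ∃ e, e ∉ dom ψ ∧ π ψ = some e ∧
      ∀ e', e' ∉ dom ψ → Dwc f U e' ψ / c e' ≤ Dwc f U e ψ / c e)

section Aux

variable {ι O : Type*}

lemma consistent_of_subreal {φ : ι → O} {ψ ψ' : ι → Option O}
    (h : subreal ψ ψ') (hc : consistent φ ψ') : consistent φ ψ :=
  fun e o he => hc e o (h e o he)

/-- Union of two partial realizations, prioritizing the second. -/
def unionPR (ψ χ : ι → Option O) : ι → Option O :=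
  fun x => match χ x with
  | some o => some o
  | none => ψ x

lemma unionPR_of_some {ψ χ : ι → Option O} {x : ι} {o : O} (h : χ x = some o) :
    unionPR ψ χ x = some o := by simp [unionPR, h]

lemma unionPR_of_none {ψ χ : ι → Option O} {x : ι} (h : χ x = none) :
    unionPR ψ χ x = ψ x := by simp [unionPR, h]

lemma subreal_unionPR_right (ψ χ : ι → Option O) : subreal χ (unionPR ψ χ) :=
  fun _ _ h => unionPR_of_some h

lemma subreal_unionPR_left {φ : ι → O} {ψ χ : ι → Option O}
    (h1 : consistent φ ψ) (h2 : consistent φ χ) : subreal ψ (unionPR ψ χ) := by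
  intro x o h
  cases hx : χ x with
  | none => rw [unionPR_of_none hx]; exact h
  | some o' =>
      have ho : o' = o := by rw [← h2 x o' hx, h1 x o h]
      rw [unionPR_of_some hx, ho]

lemma consistent_unionPR {φ : ι → O} {ψ χ : ι → Option O}
    (h1 : consistent φ ψ) (h2 : consistent φ χ) : consistent φ (unionPR ψ χ) := by
  intro x o h
  cases hx : χ x with
  | none => rw [unionPR_of_none hx] at h; exact h1 x o h
  | some o' =>
      rw [unionPR_of_some hx] at h
      obtain rfl := Option.some.inj h
      exact h2 x o' hx

lemma subreal_toPR {φ : ι → O} {ψ : ι → Option O} (h : consistent φ ψ) :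
    subreal ψ (toPR φ) := by
  intro x o hx
  show some (φ x) = some o
  rw [h x o hx]

lemma consistent_toPR (φ : ι → O) : consistent φ (toPR φ) := by
  intro x o hx
  exact Option.some.inj hx

lemma run_consistent [DecidableEq ι] (π : (ι → Option O) → Option ι) (φ : ι → O) :
    ∀ n, consistent φ (runPolicy π φ n)
  | 0 => by intro x o h; simp [runPolicy, emptyPR] at h
  | n+1 => by
      intro x o h
      have ih := run_consistent π φ n
      show φ x = o
      unfold runPolicy stepPolicy at h
      cases hs : π (runPolicy π φ n) with
      | none => rw [hs] at h; exact ih x o h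
      | some a =>
          rw [hs] at h
          unfold extendPR at h
          by_cases hx : x = a
          · subst hx; simp at h; exact h
          · simp [hx] at h; exact ih x o h

lemma subreal_run_succ [DecidableEq ι] {π : (ι → Option O) → Option ι}
    (hv : ValidPolicy π) (φ : ι → O) (n : ℕ) :
    subreal (runPolicy π φ n) (runPolicy π φ (n+1)) := by
  intro x o h
  show stepPolicy π φ (runPolicy π φ n) x = some o
  unfold stepPolicy
  cases hs : π (runPolicy π φ n) with
  | none => exact h
  | some a =>
      have ha := hv _ _ hs
      have hx : x ≠ a := fun hxa => by rw [hxa, ha] at h; cases h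
      simp only [extendPR, if_neg hx]
      exact h

lemma run_congr [DecidableEq ι] {π : (ι → Option O) → Option ι}
    (hv : ValidPolicy π) (φ' φ'' : ι → O) :
    ∀ n, consistent φ'' (runPolicy π φ' n) → runPolicy π φ'' n = runPolicy π φ' n
  | 0, _ => rfl
  | n+1, h => by
      have hsub := subreal_run_succ hv φ' n
      have hn := run_congr hv φ' φ'' n (consistent_of_subreal hsub h)
      show stepPolicy π φ'' (runPolicy π φ'' n) = stepPolicy π φ' (runPolicy π φ' n)
      rw [hn]
      unfold stepPolicy
      cases hs : π (runPolicy π φ' n) with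
      | none => rfl
      | some a =>
          have hφa : φ'' a = φ' a := by
            apply h a
            show stepPolicy π φ' (runPolicy π φ' n) a = some (φ' a)
            unfold stepPolicy
            rw [hs]
            show extendPR (runPolicy π φ' n) a (φ' a) a = some (φ' a)
            simp [extendPR]
          show extendPR (runPolicy π φ' n) a (φ'' a) = extendPR (runPolicy π φ' n) a (φ' a)
          rw [hφa]

lemma Dwc_le [DecidableEq ι] [Fintype O] (f : (ι → Option O) → ℝ) (U : Set (ι → O))
    {φ : ι → O} (hφU : φ ∈ U) {ψ : ι → Option O} (hcons : consistent φ ψ) (a : ι) :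
    Dwc f U a ψ ≤ f (extendPR ψ a (φ a)) - f ψ :=
  csInf_le ((Set.toFinite _).image _).bddBelow ⟨φ a, ⟨φ, hφU, hcons, rfl⟩, rfl⟩

lemma Dwc_attained [DecidableEq ι] [Fintype O] (f : (ι → Option O) → ℝ)
    (U : Set (ι → O)) {ψ : ι → Option O} (h : ∃ φ ∈ U, consistent φ ψ) (a : ι) :
    ∃ φ'' ∈ U, consistent φ'' ψ ∧ f (extendPR ψ a (φ'' a)) - f ψ = Dwc f U a ψ := by
  obtain ⟨φ, hφU, hcons⟩ := h
  have hne : ((fun o => f (extendPR ψ a o) - f ψ) '' Ostates U a ψ).Nonempty :=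
    ⟨_, ⟨φ a, ⟨φ, hφU, hcons, rfl⟩, rfl⟩⟩
  have hmem := hne.csInf_mem ((Set.toFinite _).image _)
  obtain ⟨o, ⟨φ'', hφ''U, hcons'', ho⟩, hval⟩ := hmem
  exact ⟨φ'', hφ''U, hcons'', by rw [ho]; exact hval⟩

lemma f_mono [DecidableEq ι] [Fintype ι] [Fintype O] (f : (ι → Option O) → ℝ)
    (U : Set (ι → O)) (hmono : WCMonotone f U) {φ : ι → O} (hφU : φ ∈ U)
    {ψ₂ : ι → Option O} (h2 : consistent φ ψ₂) :
    ∀ ψ₁, consistent φ ψ₁ → subreal ψ₁ ψ₂ → f ψ₁ ≤ f ψ₂ := by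
  classical
  suffices H : ∀ n ψ₁, (Finset.univ.filter (fun x => ψ₁ x = none ∧ ψ₂ x ≠ none)).card = n →
      consistent φ ψ₁ → subreal ψ₁ ψ₂ → f ψ₁ ≤ f ψ₂ by
    intro ψ₁ h1 hs; exact H _ ψ₁ rfl h1 hs
  intro n
  induction n with
  | zero =>
      intro ψ₁ hcard h1 hs
      have heq : ψ₁ = ψ₂ := by
        funext x
        cases hx : ψ₁ x with
        | some o => exact (hs x o hx).symm
        | none =>
            by_contra hne
            have hx2 : ψ₂ x ≠ none := fun h => hne (by rw [h])
            have : x ∈ Finset.univ.filter (fun x => ψ₁ x = none ∧ ψ₂ x ≠ none) := by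
              simp [hx, hx2]
            rw [Finset.card_eq_zero.mp hcard] at this
            exact absurd this (Finset.notMem_empty x)
      rw [heq]
  | succ n ih =>
      intro ψ₁ hcard h1 hs
      have hne : (Finset.univ.filter (fun x => ψ₁ x = none ∧ ψ₂ x ≠ none)).Nonempty := by
        rw [← Finset.card_pos, hcard]; omega
      obtain ⟨a, ha⟩ := hne
      have hamem := ha
      rw [Finset.mem_filter] at ha
      obtain ⟨-, ha1, ha2⟩ := ha
      have hadom : a ∉ dom ψ₁ := by simp [dom, ha1]
      have hstep : f ψ₁ ≤ f (extendPR ψ₁ a (φ a)) := by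
        have hd := hmono ψ₁ ⟨φ, hφU, h1⟩ a hadom
        have hle := Dwc_le f U hφU h1 a
        linarith
      have h1' : consistent φ (extendPR ψ₁ a (φ a)) := by
        intro x o hx
        by_cases hxa : x = a
        · subst hxa; simp [extendPR] at hx; exact hx
        · simp [extendPR, hxa] at hx; exact h1 x o hx
      have hs' : subreal (extendPR ψ₁ a (φ a)) ψ₂ := by
        intro x o hx
        by_cases hxa : x = a
        · subst hxa
          simp [extendPR] at hx
          obtain ⟨o2, ho2⟩ := Option.ne_none_iff_exists'.mp ha2
          rw [ho2, ← hx, h2 x o2 ho2]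
        · simp [extendPR, hxa] at hx
          exact hs x o hx
      have hcard' : (Finset.univ.filter
          (fun x => extendPR ψ₁ a (φ a) x = none ∧ ψ₂ x ≠ none)).card = n := by
        have hset : Finset.univ.filter (fun x => extendPR ψ₁ a (φ a) x = none ∧ ψ₂ x ≠ none)
            = (Finset.univ.filter (fun x => ψ₁ x = none ∧ ψ₂ x ≠ none)).erase a := by
          ext x
          rw [Finset.mem_filter]
          simp only [Finset.mem_filter, Finset.mem_erase, Finset.mem_univ, true_and, extendPR]
          by_cases hxa : x = a
          · subst hxa; simp
          · simp [hxa]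
        rw [hset, Finset.card_erase_of_mem hamem, hcard]
        omega
      exact le_trans hstep (ih _ hcard' h1' hs')

lemma costPR_empty [Fintype ι] (c : ι → ℝ) : costPR c (emptyPR : ι → Option O) = 0 := by
  simp [costPR, emptyPR]

lemma costPR_nonneg [Fintype ι] {c : ι → ℝ} (hc : ∀ e, 0 < c e) (χ : ι → Option O) :
    0 ≤ costPR c χ := by
  refine Finset.sum_nonneg fun x _ => ?_
  split
  · exact (hc x).le
  · exact le_rfl

lemma costPR_extend [Fintype ι] [DecidableEq ι] (c : ι → ℝ) (χ : ι → Option O)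
    (a : ι) (o : O) (h : χ a = none) :
    costPR c (extendPR χ a o) = costPR c χ + c a := by
  classical
  unfold costPR
  rw [← Finset.sum_erase_add _ _ (Finset.mem_univ a),
      ← Finset.sum_erase_add _ _ (Finset.mem_univ a)]
  have h1 : ∀ x ∈ Finset.univ.erase a,
      (if (extendPR χ a o x).isSome then c x else 0) = (if (χ x).isSome then c x else 0) := by
    intro x hx
    have hxa := (Finset.mem_erase.mp hx).1
    simp [extendPR, hxa]
  rw [Finset.sum_congr rfl h1]
  simp [extendPR, h]

lemma greedy_bound [Fintype ι] [DecidableEq ι] [Fintype O]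
    (U : Set (ι → O)) (c : ι → ℝ) (hc : ∀ e, 0 < c e)
    (f : (ι → Option O) → ℝ)
    (hmono : WCMonotone f U) (hsub : WCSubmodular f U)
    (ψ : ι → Option O) (hψ : ∃ φ ∈ U, consistent φ ψ)
    (e : ι) (he : e ∉ dom ψ)
    (hmax : ∀ e', e' ∉ dom ψ → Dwc f U e' ψ / c e' ≤ Dwc f U e ψ / c e)
    (πs : (ι → Option O) → Option ι) (hπs : ValidPolicy πs) :
    ∀ n, ∃ φ' ∈ U, consistent φ' ψ ∧
      f (unionPR ψ (runPolicy πs φ' n)) - f ψ ≤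
        (Dwc f U e ψ / c e) * costPR c (runPolicy πs φ' n) := by
  have hρ : 0 ≤ Dwc f U e ψ / c e := div_nonneg (hmono ψ hψ e he) (hc e).le
  intro n
  induction n with
  | zero =>
      obtain ⟨φ', hφ'U, hcons⟩ := hψ
      refine ⟨φ', hφ'U, hcons, ?_⟩
      have h1 : unionPR ψ (runPolicy πs φ' 0) = ψ := by
        funext x; exact unionPR_of_none rfl
      rw [h1]
      rw [show runPolicy πs φ' 0 = (emptyPR : ι → Option O) from rfl, costPR_empty]
      simp
  | succ n ih =>
      obtain ⟨φ', hφ'U, hcons, hbound⟩ := ih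
      set χ := runPolicy πs φ' n with hχ
      have hχcons : consistent φ' χ := run_consistent πs φ' n
      cases hs : πs χ with
      | none =>
          refine ⟨φ', hφ'U, hcons, ?_⟩
          have hstep : runPolicy πs φ' (n+1) = χ := by
            show stepPolicy πs φ' χ = χ
            unfold stepPolicy; rw [hs]
          rw [hstep]
          exact hbound
      | some a =>
          have haχ : χ a = none := hπs χ a hs
          by_cases haψ : ψ a = none
          · -- a is a fresh item
            have haU : unionPR ψ χ a = none := by
              rw [unionPR_of_none haχ]; exact haψ
            have hadom : a ∉ dom (unionPR ψ χ) := by simp [dom, haU]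
            have hsubψ : subreal ψ (unionPR ψ χ) := subreal_unionPR_left hcons hχcons
            have hconsU : consistent φ' (unionPR ψ χ) := consistent_unionPR hcons hχcons
            obtain ⟨φ'', hφ''U, hcons'', hval⟩ :=
              Dwc_attained f U ⟨φ', hφ'U, hconsU⟩ a
            have hcψ : consistent φ'' ψ := consistent_of_subreal hsubψ hcons''
            have hcχ : consistent φ'' χ :=
              consistent_of_subreal (subreal_unionPR_right ψ χ) hcons''
            have hrune : runPolicy πs φ'' n = χ := run_congr hπs φ' φ'' n hcχ
            refine ⟨φ'', hφ''U, hcψ, ?_⟩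
            have hrun2 : runPolicy πs φ'' (n+1) = extendPR χ a (φ'' a) := by
              show stepPolicy πs φ'' (runPolicy πs φ'' n) = _
              rw [hrune]
              unfold stepPolicy; rw [hs]
            rw [hrun2]
            have hunion : unionPR ψ (extendPR χ a (φ'' a))
                = extendPR (unionPR ψ χ) a (φ'' a) := by
              funext x
              by_cases hxa : x = a
              · subst hxa; simp [unionPR, extendPR]
              · simp [unionPR, extendPR, hxa]
            rw [hunion, costPR_extend c χ a _ haχ]
            have hDsub : Dwc f U a (unionPR ψ χ) ≤ Dwc f U a ψ :=
              hsub ψ (unionPR ψ χ) hsubψ ⟨φ'', hφ''U, hcons''⟩ a hadom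
            have hDmax : Dwc f U a ψ ≤ (Dwc f U e ψ / c e) * c a := by
              have hm := hmax a (by simp [dom, haψ])
              have h' : (Dwc f U a ψ / c a) * c a ≤ (Dwc f U e ψ / c e) * c a :=
                mul_le_mul_of_nonneg_right hm (hc a).le
              rwa [div_mul_cancel₀ _ (hc a).ne'] at h'
            rw [mul_add]
            linarith
          · -- a already observed in ψ
            obtain ⟨o₀, ho₀⟩ := Option.ne_none_iff_exists'.mp haψ
            refine ⟨φ', hφ'U, hcons, ?_⟩
            have hrun1 : runPolicy πs φ' (n+1) = extendPR χ a (φ' a) := by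
              show stepPolicy πs φ' χ = _
              unfold stepPolicy; rw [hs]
            rw [hrun1]
            have hφa : φ' a = o₀ := hcons a o₀ ho₀
            have hunion : unionPR ψ (extendPR χ a (φ' a)) = unionPR ψ χ := by
              funext x
              by_cases hxa : x = a
              · subst hxa
                rw [unionPR_of_some
                      (show extendPR χ x (φ' x) x = some (φ' x) by simp [extendPR]),
                    unionPR_of_none haχ, ho₀, hφa]
              · have hx : extendPR χ a (φ' a) x = χ x := by simp [extendPR, hxa]
                simp only [unionPR, hx]
            rw [hunion, costPR_extend c χ a _ haχ, mul_add]
            have hpos : 0 ≤ (Dwc f U e ψ / c e) * c a := mul_nonneg hρ (hc a).le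
            linarith

end Aux

/-- **Greedy never selects an item costlier than the optimum.** Suppose `f` is
worst-case monotone and worst-case submodular and `f φ = Q` for every `φ ∈ U`.
Let `ψ` be a partial realization consistent with some realization in `U` with
`f ψ < Q`, and let `e ∈ E \ dom ψ` maximize `Δwc(·|ψ)/c(·)` over `E \ dom ψ`.
Then `c e ≤ c_wc(π*)` for every adaptive policy `π*` covering `Q`. -/
theorem stmt_10 {ι O : Type*} [Fintype ι] [Nonempty ι] [DecidableEq ι] [Fintype O]
    (U : Set (ι → O)) (hU : U.Nonempty)
    (c : ι → ℝ) (hc : ∀ e, 0 < c e)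
    (f : (ι → Option O) → ℝ) (hf0 : ∀ ψ, 0 ≤ f ψ)
    (hmono : WCMonotone f U) (hsub : WCSubmodular f U)
    (Q : ℝ) (hfull : ∀ φ ∈ U, f (toPR φ) = Q)
    (ψ : ι → Option O) (hψ : ∃ φ ∈ U, consistent φ ψ) (hfψ : f ψ < Q)
    (e : ι) (he : e ∉ dom ψ)
    (hmax : ∀ e', e' ∉ dom ψ → Dwc f U e' ψ / c e' ≤ Dwc f U e ψ / c e)
    (πs : (ι → Option O) → Option ι) (hπs : ValidPolicy πs)
    (hcov : Covers f U πs Q) :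
    c e ≤ cwc c U πs := by
  obtain ⟨φ'', hφ''U, hcψ, hbound⟩ :=
    greedy_bound U c hc f hmono hsub ψ hψ e he hmax πs hπs (Fintype.card ι)
  set χ := runPolicy πs φ'' (Fintype.card ι) with hχ
  have hχcons : consistent φ'' χ := run_consistent πs φ'' _
  have hQ : Q ≤ f χ := hcov φ'' hφ''U
  have hfmono : f χ ≤ f (unionPR ψ χ) :=
    f_mono f U hmono hφ''U (consistent_unionPR hcψ hχcons) χ hχcons
      (subreal_unionPR_right ψ χ)
  have hC0 : 0 ≤ costPR c χ := costPR_nonneg hc χ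
  obtain ⟨φ₀, hφ₀U, hφ₀cons⟩ := hψ
  have hD1 : Dwc f U e ψ ≤ f (extendPR ψ e (φ₀ e)) - f ψ := Dwc_le f U hφ₀U hφ₀cons e
  have hD2 : f (extendPR ψ e (φ₀ e)) ≤ Q := by
    have hconsE : consistent φ₀ (extendPR ψ e (φ₀ e)) := by
      intro x o hx
      by_cases hxa : x = e
      · subst hxa; simp [extendPR] at hx; exact hx
      · simp [extendPR, hxa] at hx; exact hφ₀cons x o hx
    have hle := f_mono f U hmono hφ₀U (consistent_toPR φ₀) _ hconsE (subreal_toPR hconsE)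
    rw [hfull φ₀ hφ₀U] at hle
    exact hle
  set D := Dwc f U e ψ with hD
  have hchain : Q - f ψ ≤ (D / c e) * costPR c χ := by linarith
  have hcsup : costPR c χ ≤ cwc c U πs :=
    le_csSup (((Set.toFinite U).image _).bddAbove) ⟨φ'', hφ''U, rfl⟩
  have hDQ : D ≤ Q - f ψ := by linarith
  have h1 : (Q - f ψ) * c e ≤ D * costPR c χ := by
    rw [div_mul_eq_mul_div] at hchain
    exact (le_div_iff₀ (hc e)).mp hchain
  have h2 : D * costPR c χ ≤ (Q - f ψ) * costPR c χ :=
    mul_le_mul_of_nonneg_right hDQ hC0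
  have h3 : c e ≤ costPR c χ :=
    le_of_mul_le_mul_left (by linarith) (by linarith : (0:ℝ) < Q - f ψ)
  linarith

end WCAS
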